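/- Let k be a positive integer such that p = 2k+1 is prime. Then there exists a special KM-logarithm of length k. -/

import Mathlib

/-- A logarithmic function of length `k`: `f (a*b) = f a + f b` whenever
`a, b ∈ {1, …, k}` and `a*b ≤ k`. -/
def IsLogFun (k : ℕ) (f : ℕ → ZMod k) : Prop :=
  ∀ a b : ℕ, 1 ≤ a → 1 ≤ b → a ≤ k → b ≤ k → a * b ≤ k → f (a * b) = f a + f b

/-- A logarithm of length `k` is a logarithmic function that is a bijection
from `{1, …, k}` to `ℤ/kℤ`. -/
def IsLogarithm (k : ℕ) (f : ℕ → ZMod k) : Prop :=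
  IsLogFun k f ∧ Set.BijOn f (Set.Icc 1 k) Set.univ

/-- A special KM-logarithm of length `k`: a logarithm such that either `k` is odd,
or `k` is even and `f m` is an even element of `ℤ/kℤ` for every divisor `m` of `k/2`. -/
def IsSpecialKM (k : ℕ) (f : ℕ → ZMod k) : Prop :=
  IsLogarithm k f ∧ (Even k → ∀ m : ℕ, m ∣ k / 2 → ∃ y : ZMod k, f m = y + y)

/-- Every positive divisor of `(p-1)/4` is a quadratic residue mod `p`. -/
lemma aux_sq (p : ℕ) [Fact p.Prime] (hp4 : p % 4 = 1) :
    ∀ m : ℕ, 0 < m → m ∣ (p - 1) / 4 → IsSquare ((m : ZMod p)) := by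
  have hp2 : 2 ≤ p := (Fact.out : p.Prime).two_le
  intro m
  induction m using Nat.recOnMul with
  | zero => intro h; exact absurd h (lt_irrefl 0)
  | one => intro _ _; simpa using (isSquare_one (α := ZMod p))
  | prime q hq =>
    intro _ hdvd
    have h4 : 4 ∣ p - 1 := by omega
    have hqp : q ∣ p - 1 := hdvd.trans (Nat.div_dvd_of_dvd h4)
    by_cases hq2 : q = 2
    · subst hq2
      have h8 : 8 ∣ p - 1 := by omega
      have hp8 : p % 8 = 1 := by omega
      have := (ZMod.exists_sq_eq_two_iff (p := p) (by omega)).mpr (Or.inl hp8)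
      simpa using this
    · haveI : Fact q.Prime := ⟨hq⟩
      rw [ZMod.exists_sq_eq_prime_iff_of_mod_four_eq_one hp4 hq2]
      have h0 : ((p - 1 : ℕ) : ZMod q) = 0 := (ZMod.natCast_eq_zero_iff _ _).mpr hqp
      have h1 : ((p : ℕ) : ZMod q) = 1 := by
        have hpe : p = (p - 1) + 1 := by omega
        rw [hpe]; push_cast; rw [h0]; ring
      rw [h1]; exact IsSquare.one
  | mul a b iha ihb =>
    intro hpos hdvd
    have ha : 0 < a := Nat.pos_of_ne_zero (by rintro rfl; simp at hpos)
    have hb : 0 < b := Nat.pos_of_ne_zero (by rintro rfl; simp at hpos)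
    push_cast
    exact (iha ha ((dvd_mul_right a b).trans hdvd)).mul (ihb hb ((dvd_mul_left b a).trans hdvd))

theorem stmt_9 (k : ℕ) (hk : 0 < k) (hp : Nat.Prime (2 * k + 1)) :
    ∃ f : ℕ → ZMod k, IsSpecialKM k f := by
  classical
  haveI hfact : Fact (Nat.Prime (2 * k + 1)) := ⟨hp⟩
  haveI : NeZero (2 * k) := ⟨by omega⟩
  haveI : NeZero k := ⟨by omega⟩
  obtain ⟨g, hg⟩ := IsCyclic.exists_generator (α := (ZMod (2 * k + 1))ˣ)
  have hcard : Nat.card (ZMod (2 * k + 1))ˣ = 2 * k := by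
    rw [Nat.card_eq_fintype_card, ZMod.card_units_eq_totient, Nat.totient_prime hp]
    omega
  have horder : orderOf g = 2 * k := by
    rw [orderOf_eq_card_of_forall_mem_zpowers hg, hcard]
  set e : ZMod (2 * k) → (ZMod (2 * k + 1))ˣ := fun n => g ^ n.val with he
  have hemul : ∀ n m, e (n + m) = e n * e m := by
    intro n m
    simp only [he]
    have hmod := pow_mod_orderOf g (n.val + m.val)
    rw [horder] at hmod
    rw [ZMod.val_add, ← pow_add]
    exact hmod
  have hebij : Function.Bijective e := by
    rw [Fintype.bijective_iff_injective_and_card]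
    constructor
    · intro n m h
      have h1 : n.val ∈ Set.Iio (orderOf g) := by rw [horder]; exact ZMod.val_lt n
      have h2 : m.val ∈ Set.Iio (orderOf g) := by rw [horder]; exact ZMod.val_lt m
      have := pow_injOn_Iio_orderOf h1 h2 h
      exact ZMod.val_injective _ this
    · rw [ZMod.card, ← Nat.card_eq_fintype_card, hcard]
  set E := Equiv.ofBijective e hebij with hE
  set ind : (ZMod (2 * k + 1))ˣ → ZMod (2 * k) := ⇑E.symm with hindd
  have hEapp : ∀ x, E x = e x := fun _ => rfl
  have heind : ∀ n, ind (e n) = n := fun n => E.symm_apply_apply n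
  have hindE : ∀ u, e (ind u) = u := fun u => E.apply_symm_apply u
  have hind : ∀ u v, ind (u * v) = ind u + ind v := by
    intro u v
    apply E.injective
    rw [hEapp, hEapp, hemul, hindE, hindE, hindE]
  set U : ℕ → (ZMod (2 * k + 1))ˣ :=
    fun a => if h : IsUnit ((a : ZMod (2 * k + 1))) then h.unit else 1 with hUdef
  have hUval : ∀ a : ℕ, 1 ≤ a → a ≤ k →
      ((U a : (ZMod (2 * k + 1))ˣ) : ZMod (2 * k + 1)) = (a : ZMod (2 * k + 1)) := by
    intro a h1 h2
    have hne : (a : ZMod (2 * k + 1)) ≠ 0 := by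
      rw [Ne, ZMod.natCast_eq_zero_iff]
      intro hdvd
      have := Nat.le_of_dvd (by omega) hdvd
      omega
    have hu : IsUnit (a : ZMod (2 * k + 1)) := hne.isUnit
    simp only [hUdef, dif_pos hu]
    exact hu.unit_spec
  set f : ℕ → ZMod k :=
    fun a => (ZMod.castHom (dvd_mul_left k 2) (ZMod k)) (ind (U a)) with hf
  -- the element g^k is -1
  have hj2 : (g ^ k) * (g ^ k) = 1 := by
    have h1 := pow_orderOf_eq_one g
    rw [horder] at h1
    rw [← pow_add, ← two_mul]
    exact h1
  have hj1 : g ^ k ≠ 1 := by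
    intro h
    have := orderOf_dvd_of_pow_eq_one h
    rw [horder] at this
    exact absurd (Nat.le_of_dvd hk this) (by omega)
  have hj : ((g ^ k : (ZMod (2 * k + 1))ˣ) : ZMod (2 * k + 1)) = -1 := by
    have hx : ((g ^ k : (ZMod (2 * k + 1))ˣ) : ZMod (2 * k + 1)) *
        ((g ^ k : (ZMod (2 * k + 1))ˣ) : ZMod (2 * k + 1)) = 1 := by
      rw [← Units.val_mul, hj2, Units.val_one]
    have hfac : (((g ^ k : (ZMod (2 * k + 1))ˣ) : ZMod (2 * k + 1)) - 1) *
        (((g ^ k : (ZMod (2 * k + 1))ˣ) : ZMod (2 * k + 1)) + 1) = 0 := by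
      ring_nf
      linear_combination hx
    rcases mul_eq_zero.mp hfac with h | h
    · exact absurd (Units.ext (by rw [sub_eq_zero.mp h, Units.val_one])) hj1
    · exact eq_neg_of_add_eq_zero_left h
  -- log function property
  have hlog : IsLogFun k f := by
    intro a b ha hb hak hbk habk
    have hUab : U (a * b) = U a * U b := by
      apply Units.ext
      rw [Units.val_mul, hUval a ha hak, hUval b hb hbk,
        hUval (a * b) (Nat.one_le_iff_ne_zero.mpr (by positivity)) habk]
      push_cast
      ring
    simp only [hf]
    rw [hUab, hind, map_add]
  -- injectivity
  have hinj : Set.InjOn f (Set.Icc 1 k) := by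
    rintro a ⟨ha1, hak⟩ b ⟨hb1, hbk⟩ hfeq
    simp only [hf] at hfeq
    have hsub : (((ind (U a) - ind (U b)).val : ℕ) : ZMod k) = 0 := by
      have h0 : (ZMod.castHom (dvd_mul_left k 2) (ZMod k)) (ind (U a) - ind (U b)) = 0 := by
        rw [map_sub, hfeq, sub_self]
      rwa [ZMod.castHom_apply, ← ZMod.natCast_val] at h0
    have hdvd : k ∣ (ind (U a) - ind (U b)).val :=
      (ZMod.natCast_eq_zero_iff _ _).mp hsub
    obtain ⟨c, hc⟩ := hdvd
    have hlt : (ind (U a) - ind (U b)).val < 2 * k := ZMod.val_lt _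
    have hc2 : c = 0 ∨ c = 1 := by
      rcases Nat.lt_or_ge c 2 with h | h
      · omega
      · exfalso; have := Nat.mul_le_mul_left k h; omega
    rcases hc2 with rfl | rfl
    · -- difference is 0, so U a = U b
      have : ind (U a) - ind (U b) = 0 := by
        rw [← ZMod.val_eq_zero]; omega
      have hUab : U a = U b := E.symm.injective (sub_eq_zero.mp this)
      have hcast : (a : ZMod (2 * k + 1)) = (b : ZMod (2 * k + 1)) := by
        rw [← hUval a ha1 hak, ← hUval b hb1 hbk, hUab]
      have := (ZMod.natCast_eq_natCast_iff a b (2 * k + 1)).mp hcast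
      exact this.eq_of_lt_of_lt (by omega) (by omega)
    · -- difference is k, so a = -b mod p, impossible
      exfalso
      have hvk : ((k : ℕ) : ZMod (2 * k)).val = k := ZMod.val_natCast_of_lt (by omega)
      have hdk : ind (U a) - ind (U b) = ((k : ℕ) : ZMod (2 * k)) := by
        apply ZMod.val_injective
        rw [hvk]; omega
      have hAB : ind (U a) = ind (U b) + ((k : ℕ) : ZMod (2 * k)) := by
        rw [← hdk]; ring
      have hek : e ((k : ℕ) : ZMod (2 * k)) = g ^ k := by
        simp only [he, hvk]
      have hUa : U a = U b * g ^ k := by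
        rw [← hindE (U a), hAB, hemul, hindE, hek]
      have hcast : (a : ZMod (2 * k + 1)) = -(b : ZMod (2 * k + 1)) := by
        rw [← hUval a ha1 hak, hUa, Units.val_mul, hUval b hb1 hbk, hj]
        ring
      have hzero : ((a + b : ℕ) : ZMod (2 * k + 1)) = 0 := by
        push_cast
        rw [hcast]; ring
      have := (ZMod.natCast_eq_zero_iff _ _).mp hzero
      have := Nat.le_of_dvd (by omega) this
      omega
  -- surjectivity
  have hsurj : Set.SurjOn f (Set.Icc 1 k) Set.univ := by
    intro y _
    set n : ZMod (2 * k) := ((y.val : ℕ) : ZMod (2 * k)) with hn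
    have hcastn : (ZMod.castHom (dvd_mul_left k 2) (ZMod k)) n = y := by
      rw [hn, map_natCast, ZMod.natCast_val, ZMod.cast_id]
    set u := e n with hu
    have hindu : ind u = n := heind n
    set x := ((u : ZMod (2 * k + 1))).val with hx
    have hx0 : x ≠ 0 := by
      rw [hx, Ne, ZMod.val_eq_zero]
      exact Units.ne_zero u
    have hxlt : x < 2 * k + 1 := ZMod.val_lt _
    have hux : ((x : ℕ) : ZMod (2 * k + 1)) = (u : ZMod (2 * k + 1)) := by
      rw [hx, ZMod.natCast_val, ZMod.cast_id]
    by_cases hxk : x ≤ k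
    · refine ⟨x, ⟨by omega, hxk⟩, ?_⟩
      have hUx : U x = u := Units.ext (by rw [hUval x (by omega) hxk, hux])
      simp only [hf]
      rw [hUx, hindu, hcastn]
    · refine ⟨2 * k + 1 - x, ⟨by omega, by omega⟩, ?_⟩
      have hcoe : (((2 * k + 1 - x : ℕ)) : ZMod (2 * k + 1)) = -(u : ZMod (2 * k + 1)) := by
        have hps : ((2 * k + 1 : ℕ) : ZMod (2 * k + 1)) = 0 := ZMod.natCast_self _
        rw [Nat.cast_sub (by omega)]
        push_cast at hps ⊢
        rw [hux] <;> try rfl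
        linear_combination hps
      have hUx : U (2 * k + 1 - x) = u * g ^ k := by
        apply Units.ext
        rw [hUval _ (by omega) (by omega), Units.val_mul, hj, hcoe]
        ring
      simp only [hf]
      have hek : e ((k : ℕ) : ZMod (2 * k)) = g ^ k := by
        simp only [he, ZMod.val_natCast_of_lt (show k < 2 * k by omega)]
      rw [hUx, hind, hindu, ← hek, heind, map_add, map_natCast, map_natCast,
        ZMod.natCast_self, add_zero, ZMod.natCast_val, ZMod.cast_id]
  -- special KM property
  have hspec : Even k → ∀ m : ℕ, m ∣ k / 2 → ∃ y : ZMod k, f m = y + y := by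
    intro hke m hm
    obtain ⟨t, ht⟩ := hke
    have hk2 : 0 < k / 2 := by omega
    have hm0 : 0 < m := by
      rcases Nat.eq_zero_or_pos m with rfl | h
      · exfalso; have := Nat.eq_zero_of_zero_dvd hm; omega
      · exact h
    have hmk : m ≤ k := le_trans (Nat.le_of_dvd hk2 hm) (by omega)
    have hp4 : (2 * k + 1) % 4 = 1 := by omega
    have hdvd4 : m ∣ (2 * k + 1 - 1) / 4 := by
      have h44 : (2 * k + 1 - 1) / 4 = k / 2 := by omega
      rw [h44]; exact hm
    obtain ⟨c, hc⟩ := aux_sq (2 * k + 1) hp4 m hm0 hdvd4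
    have hcne : c ≠ 0 := by
      intro h0
      have hmne : ((m : ℕ) : ZMod (2 * k + 1)) ≠ 0 := by
        rw [Ne, ZMod.natCast_eq_zero_iff]
        intro hdvd
        have := Nat.le_of_dvd (by omega) hdvd
        omega
      rw [h0, mul_zero] at hc
      exact hmne hc
    have hcu : IsUnit c := hcne.isUnit
    have hUm : U m = hcu.unit * hcu.unit := by
      apply Units.ext
      rw [hUval m hm0 hmk, Units.val_mul, hcu.unit_spec, hc]
    refine ⟨(ZMod.castHom (dvd_mul_left k 2) (ZMod k)) (ind hcu.unit), ?_⟩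
    simp only [hf]
    rw [hUm, hind, map_add]
  exact ⟨f, ⟨hlog, fun _ _ => trivial, hinj, hsurj⟩, hspec⟩
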